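/- Let (X, Σ, μ) be a σ-finite measure space and f ∈ L^∞(X). Then the multiplication operator M_f on L²(X) attains its minimum modulus if and only if there exists a measurable set A with μ(A) > 0 such that |f(t)| = ess inf(f) for all t ∈ A. -/

import Mathlib

open ContinuousLinearMap MeasureTheory
open scoped ENNReal

variable {E F : Type*} [NormedAddCommGroup E] [InnerProductSpace ℂ E] [CompleteSpace E]
  [NormedAddCommGroup F] [InnerProductSpace ℂ F] [CompleteSpace F]

/-- The point spectrum (set of eigenvalues). -/
def pointSpec (T : E →L[ℂ] E) : Set ℂ := {l | ∃ x : E, x ≠ 0 ∧ T x = l • x}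

/-- The essential spectrum of a (self-adjoint) bounded operator: eigenvalues of infinite
multiplicity, limit points of the point spectrum, and the continuous spectrum. -/
def essSpec (T : E →L[ℂ] E) : Set ℂ :=
  {l | (¬ FiniteDimensional ℂ (LinearMap.ker ((T - l • (1 : E →L[ℂ] E) : E →L[ℂ] E) : E →ₗ[ℂ] E))) ∨
       l ∈ closure (pointSpec T \ {l}) ∨
       (l ∈ spectrum ℂ T ∧ Function.Injective ⇑(T - l • (1 : E →L[ℂ] E)) ∧
         Dense (Set.range ⇑(T - l • (1 : E →L[ℂ] E))))}

/-- The discrete spectrum: isolated eigenvalues of finite multiplicity. -/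
def discSpec (T : E →L[ℂ] E) : Set ℂ :=
  {l | l ∈ pointSpec T ∧ FiniteDimensional ℂ (LinearMap.ker ((T - l • (1 : E →L[ℂ] E) : E →L[ℂ] E) : E →ₗ[ℂ] E)) ∧
       l ∉ closure (spectrum ℂ T \ {l})}

/-- The minimum modulus m(T) = inf {‖Tx‖ : ‖x‖ = 1}. -/
noncomputable def minMod (T : E →L[ℂ] F) : ℝ := sInf ((fun x => ‖T x‖) '' {x : E | ‖x‖ = 1})

/-- T attains its minimum modulus. -/
def MinAttain (T : E →L[ℂ] F) : Prop := ∃ x : E, ‖x‖ = 1 ∧ ‖T x‖ = minMod T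

/-- T attains its norm. -/
def NormAttain (T : E →L[ℂ] F) : Prop := ∃ x : E, ‖x‖ = 1 ∧ ‖T x‖ = ‖T‖

/-- T is absolutely minimum attaining (AM). -/
def AbsMinAttain (T : E →L[ℂ] F) : Prop :=
  ∀ M : Submodule ℂ E, IsClosed (M : Set E) → MinAttain (T.comp M.subtypeL)

/-- T is absolutely norm attaining (AN). -/
def AbsNormAttain (T : E →L[ℂ] F) : Prop :=
  ∀ M : Submodule ℂ E, IsClosed (M : Set E) → NormAttain (T.comp M.subtypeL)

/-- S is the Moore-Penrose (generalized) inverse of T. -/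
def MoorePenrose (T S : E →L[ℂ] E) : Prop :=
  T ∘L S ∘L T = T ∧ S ∘L T ∘L S = S ∧ IsSelfAdjoint (T ∘L S) ∧ IsSelfAdjoint (S ∘L T)

/-- T is paranormal: ‖Tx‖² ≤ ‖T²x‖‖x‖ for all x. -/
def Paranormal (T : E →L[ℂ] E) : Prop := ∀ x : E, ‖T x‖ ^ 2 ≤ ‖T (T x)‖ * ‖x‖

section aux
variable {X : Type*} [MeasurableSpace X] {μ : Measure X} {f : X → ℂ}
  {Mf : Lp ℂ 2 μ →L[ℂ] Lp ℂ 2 μ}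

lemma aux_norm (hMf : ∀ g : Lp ℂ 2 μ, ⇑(Mf g) =ᵐ[μ] fun x => f x * g x) (g : Lp ℂ 2 μ) :
    ‖Mf g‖ = (eLpNorm (fun x => f x * g x) 2 μ).toReal := by
  rw [Lp.norm_def, eLpNorm_congr_ae (hMf g)]

lemma aux_ne_top (hMf : ∀ g : Lp ℂ 2 μ, ⇑(Mf g) =ᵐ[μ] fun x => f x * g x) (g : Lp ℂ 2 μ) :
    eLpNorm (fun x => f x * g x) 2 μ ≠ ⊤ := by
  rw [← eLpNorm_congr_ae (hMf g)]; exact Lp.eLpNorm_ne_top _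

lemma aux_lower (hMf : ∀ g : Lp ℂ 2 μ, ⇑(Mf g) =ᵐ[μ] fun x => f x * g x)
    {m : ℝ} (hm0 : 0 ≤ m) (hm : ∀ᵐ x ∂μ, m ≤ ‖f x‖) (g : Lp ℂ 2 μ) :
    m * ‖g‖ ≤ ‖Mf g‖ := by
  have h1 : eLpNorm ((m : ℂ) • (⇑g : X → ℂ)) 2 μ ≤ eLpNorm (fun x => f x * g x) 2 μ := by
    refine eLpNorm_mono_ae ?_
    filter_upwards [hm] with x hx
    simp only [Pi.smul_apply, smul_eq_mul, norm_mul, Complex.norm_real, Real.norm_eq_abs,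
      abs_of_nonneg hm0]
    exact mul_le_mul_of_nonneg_right hx (norm_nonneg _)
  rw [eLpNorm_const_smul] at h1
  have h2 := ENNReal.toReal_mono (aux_ne_top hMf g) h1
  rw [aux_norm hMf g]
  refine le_trans (le_of_eq ?_) h2
  rw [ENNReal.toReal_mul, ← Lp.norm_def]
  congr 1
  simp [ENNReal.coe_toReal, Complex.norm_real, abs_of_nonneg hm0]

lemma aux_unit (hMf : ∀ g : Lp ℂ 2 μ, ⇑(Mf g) =ᵐ[μ] fun x => f x * g x)
    {B : Set X} (hB : MeasurableSet B) (h0 : μ B ≠ 0) (hfin : μ B ≠ ⊤)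
    {r : ℝ} (hr : 0 ≤ r) (hbd : ∀ᵐ x ∂μ, x ∈ B → ‖f x‖ ≤ r) :
    ∃ g : Lp ℂ 2 μ, ‖g‖ = 1 ∧ ‖Mf g‖ ≤ r := by
  have hμpos : 0 < (μ B).toReal := ENNReal.toReal_pos h0 hfin
  set c : ℝ := ((μ B).toReal) ^ (-(2⁻¹ : ℝ)) with hc_def
  have hc : 0 < c := Real.rpow_pos_of_pos hμpos _
  have htR : (2 : ℝ≥0∞).toReal = (2:ℝ) := by norm_num
  have hct : c * (μ B).toReal ^ (2⁻¹ : ℝ) = 1 := by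
    rw [hc_def, ← Real.rpow_add hμpos]
    norm_num
  set g : Lp ℂ 2 μ := (c : ℂ) • indicatorConstLp 2 hB hfin (1 : ℂ) with hg_def
  have hgnorm : ‖g‖ = 1 := by
    rw [hg_def, norm_smul, norm_indicatorConstLp (by norm_num) (by norm_num)]
    rw [htR]
    simpa [Complex.norm_real, abs_of_pos hc, measureReal_def] using hct
  refine ⟨g, hgnorm, ?_⟩
  have hgae : ⇑g =ᵐ[μ] fun x => (c : ℂ) * B.indicator (fun _ => (1:ℂ)) x := by
    filter_upwards [Lp.coeFn_smul (c : ℂ) (indicatorConstLp 2 hB hfin (1 : ℂ)),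
      indicatorConstLp_coeFn (p := 2) (hs := hB) (hμs := hfin) (c := (1:ℂ))] with x h1 h2
    simp only [Pi.smul_apply, smul_eq_mul, h2] at h1
    exact h1
  have hle : eLpNorm (fun x => f x * g x) 2 μ ≤
      eLpNorm (B.indicator fun _ => c * r) 2 μ := by
    refine eLpNorm_mono_ae ?_
    filter_upwards [hgae, hbd] with x h1 h2
    rw [h1]
    by_cases hx : x ∈ B
    · rw [Set.indicator_of_mem hx, Set.indicator_of_mem hx, mul_one, norm_mul,
        Complex.norm_real, Real.norm_eq_abs, Real.norm_eq_abs, abs_of_pos hc,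
        abs_of_nonneg (mul_nonneg hc.le hr)]
      nlinarith [h2 hx, norm_nonneg (f x)]
    · simp [Set.indicator_of_notMem hx]
  rw [Lp.norm_def, eLpNorm_congr_ae (hMf g)]
  calc (eLpNorm (fun x => f x * g x) 2 μ).toReal
      ≤ (eLpNorm (B.indicator fun _ => c * r) 2 μ).toReal := by
        refine ENNReal.toReal_mono ?_ hle
        rw [eLpNorm_indicator_const hB (by norm_num) (by norm_num)]
        exact ENNReal.mul_ne_top ENNReal.coe_ne_top
          (ENNReal.rpow_ne_top_of_nonneg (by rw [htR]; norm_num) hfin)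
    _ = r := by
        rw [eLpNorm_indicator_const hB (by norm_num) (by norm_num), ENNReal.toReal_mul,
          toReal_enorm, ← ENNReal.toReal_rpow, htR,
          Real.norm_eq_abs, abs_of_nonneg (mul_nonneg hc.le hr),
          show (1:ℝ)/2 = (2⁻¹:ℝ) by norm_num]
        nlinarith [hct]

end aux

theorem stmt19 {X : Type*} [MeasurableSpace X] (μ : Measure X) [SigmaFinite μ]
    (f : X → ℂ) (hf : MemLp f ⊤ μ)
    (Mf : Lp ℂ 2 μ →L[ℂ] Lp ℂ 2 μ)
    (hMf : ∀ g : Lp ℂ 2 μ, ⇑(Mf g) =ᵐ[μ] fun x => f x * g x) :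
    MinAttain Mf ↔
      ∃ A : Set X, MeasurableSet A ∧ 0 < μ A ∧
        ∀ t ∈ A, ‖f t‖ = sSup {a : ℝ | μ {x | ‖f x‖ < a} = 0} := by
  rcases eq_or_ne μ 0 with hμ | hμ
  · subst hμ
    constructor
    · rintro ⟨g, hg, -⟩
      exfalso
      have h0 : ‖g‖ = 0 := by rw [Lp.norm_def]; simp [eLpNorm_measure_zero]
      rw [hg] at h0; norm_num at h0
    · rintro ⟨A, -, hA, -⟩
      simp at hA
  set S := {a : ℝ | μ {x | ‖f x‖ < a} = 0} with hS_def
  set m := sSup S with hm_def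
  have h0S : (0:ℝ) ∈ S := by
    have h : {x | ‖f x‖ < 0} = ∅ := by ext x; simp [(norm_nonneg (f x)).not_gt]
    simp only [hS_def, Set.mem_setOf_eq, h, measure_empty]
  have hC : ∀ᵐ x ∂μ, ‖f x‖ ≤ (eLpNorm f ⊤ μ).toReal := by
    filter_upwards [ae_le_eLpNormEssSup (f := f) (μ := μ)] with x hx
    have h1 : eLpNormEssSup f μ ≠ ⊤ := by
      rw [← eLpNorm_exponent_top]; exact hf.2.ne
    calc ‖f x‖ = ((‖f x‖₊ : ℝ≥0∞)).toReal := by simp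
      _ ≤ (eLpNormEssSup f μ).toReal := ENNReal.toReal_mono h1 hx
      _ = _ := by rw [← eLpNorm_exponent_top]
  have hbdd : BddAbove S := by
    refine ⟨(eLpNorm f ⊤ μ).toReal, fun a ha => ?_⟩
    by_contra hlt
    push_neg at hlt
    have h2 : ∀ᵐ x ∂μ, a ≤ ‖f x‖ := by
      rw [ae_iff]; simpa [not_le, hS_def] using ha
    have h3 : ∀ᵐ _x ∂μ, False := by
      filter_upwards [hC, h2] with x hx1 hx2; linarith
    rw [Filter.eventually_false_iff_eq_bot, ae_eq_bot] at h3
    exact hμ h3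
  have hm0 : 0 ≤ m := le_csSup hbdd h0S
  have hae : ∀ᵐ x ∂μ, m ≤ ‖f x‖ := by
    rw [ae_iff]
    have hsub : {x | ¬ m ≤ ‖f x‖} ⊆ ⋃ n : ℕ, {x | ‖f x‖ < m - 1/(n+1)} := by
      intro x hx
      simp only [Set.mem_setOf_eq, not_le] at hx
      obtain ⟨n, hn⟩ := exists_nat_one_div_lt (sub_pos.2 hx)
      exact Set.mem_iUnion.2 ⟨n, by simp only [Set.mem_setOf_eq]; linarith⟩
    refine measure_mono_null hsub (measure_iUnion_null fun n => ?_)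
    obtain ⟨a, haS, hlt⟩ := exists_lt_of_lt_csSup ⟨0, h0S⟩
      (show m - 1/(n+1) < m by
        have hp : (0:ℝ) < 1/(n+1) := by positivity
        linarith)
    exact measure_mono_null (fun x hx => lt_trans hx hlt) haS
  obtain ⟨f', hf'meas, hff'⟩ : ∃ f' : X → ℂ, Measurable f' ∧ f =ᵐ[μ] f' :=
    ⟨hf.1.mk f, hf.1.stronglyMeasurable_mk.measurable, hf.1.ae_eq_mk⟩
  have hbb : BddBelow ((fun x => ‖Mf x‖) '' {x : Lp ℂ 2 μ | ‖x‖ = 1}) := by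
    refine ⟨0, ?_⟩
    rintro y ⟨x, -, rfl⟩; exact norm_nonneg _
  have hupper : ∀ a : ℝ, μ {x | ‖f x‖ < a} ≠ 0 → minMod Mf ≤ a := by
    intro a ha
    have hsets : μ {x | ‖f' x‖ < a} = μ {x | ‖f x‖ < a} := by
      refine measure_congr ?_
      rw [Filter.eventuallyEq_set]
      filter_upwards [hff'] with x hx
      simp [Set.mem_setOf_eq, hx]
    have hB : MeasurableSet {x | ‖f' x‖ < a} := measurableSet_lt hf'meas.norm measurable_const
    obtain ⟨B', hB', hB'sub, hB'pos, hB'fin⟩ :=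
      Measure.exists_subset_measure_lt_top hB
        (show (0:ℝ≥0∞) < μ {x | ‖f' x‖ < a} by rw [hsets]; exact pos_iff_ne_zero.2 ha)
    obtain ⟨x₀, hx₀⟩ := nonempty_of_measure_ne_zero hB'pos.ne'
    have hr : 0 ≤ a := le_of_lt (lt_of_le_of_lt (norm_nonneg (f' x₀)) (hB'sub hx₀))
    obtain ⟨g, hg1, hg2⟩ := aux_unit hMf hB' hB'pos.ne' hB'fin.ne hr
      (by filter_upwards [hff'] with x hx hxB'
          rw [hx]; exact le_of_lt (hB'sub hxB'))
    exact le_trans (csInf_le hbb ⟨g, hg1, rfl⟩) hg2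
  have hexists_unit : ∃ g : Lp ℂ 2 μ, ‖g‖ = 1 := by
    obtain ⟨B', hB', -, hB'pos, hB'fin⟩ :=
      Measure.exists_subset_measure_lt_top MeasurableSet.univ
        (show (0:ℝ≥0∞) < μ Set.univ from
          pos_iff_ne_zero.2 (Measure.measure_univ_ne_zero.2 hμ))
    obtain ⟨g, hg1, -⟩ := aux_unit hMf hB' hB'pos.ne' hB'fin.ne ENNReal.toReal_nonneg
      (by filter_upwards [hC] with x hx; exact fun _ => hx)
    exact ⟨g, hg1⟩
  have hmm : minMod Mf = m := by
    refine le_antisymm ?_ (le_csInf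
      (by obtain ⟨g, hg⟩ := hexists_unit; exact ⟨_, g, hg, rfl⟩) ?_)
    · refine le_of_forall_pos_le_add fun ε hε => hupper (m + ε) fun hmem => ?_
      have := le_csSup hbdd hmem
      rw [← hm_def] at this
      linarith
    · rintro y ⟨x, hx, rfl⟩
      have hl := aux_lower hMf hm0 hae x
      rw [Set.mem_setOf_eq] at hx
      rw [hx, mul_one] at hl; exact hl
  constructor
  · rintro ⟨g, hg1, hg2⟩
    rw [hmm] at hg2
    have hg_eLp : eLpNorm (⇑g) 2 μ = 1 := by
      rw [← ENNReal.ofReal_toReal (Lp.eLpNorm_ne_top g), ← Lp.norm_def, hg1,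
        ENNReal.ofReal_one]
    have hfg_eLp : eLpNorm (fun x => f x * g x) 2 μ = ENNReal.ofReal m := by
      rw [← eLpNorm_congr_ae (hMf g), ← ENNReal.ofReal_toReal (Lp.eLpNorm_ne_top _),
        ← Lp.norm_def, hg2]
    have hmg_eLp : eLpNorm ((m:ℂ) • (⇑g : X → ℂ)) 2 μ = ENNReal.ofReal m := by
      rw [eLpNorm_const_smul, hg_eLp, mul_one, ← ofReal_norm]
      congr 1
      simp [Complex.norm_real, abs_of_nonneg hm0]
    have htR : (2 : ℝ≥0∞).toReal = (2:ℝ) := by norm_num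
    set F₁ : X → ℝ≥0∞ := fun x => (‖f x * g x‖₊ : ℝ≥0∞) ^ (2:ℝ) with hF₁
    set F₂ : X → ℝ≥0∞ := fun x => (‖((m:ℂ) • (⇑g : X → ℂ)) x‖₊ : ℝ≥0∞) ^ (2:ℝ) with hF₂
    have t1 := eLpNorm_eq_lintegral_rpow_enorm_toReal (μ := μ) (f := fun x => f x * g x)
      (p := 2) (by norm_num) (by norm_num)
    have t2 := eLpNorm_eq_lintegral_rpow_enorm_toReal (μ := μ)
      (f := (m:ℂ) • (⇑g : X → ℂ)) (p := 2) (by norm_num) (by norm_num)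
    simp only [enorm_eq_nnnorm] at t1 t2
    rw [htR, hfg_eLp] at t1
    rw [htR, hmg_eLp] at t2
    have hI1 : ∫⁻ x, F₁ x ∂μ = (ENNReal.ofReal m) ^ (2:ℝ) := by
      rw [show (∫⁻ x, F₁ x ∂μ) = ((∫⁻ x, F₁ x ∂μ) ^ ((1:ℝ)/2)) ^ (2:ℝ) by
        rw [← ENNReal.rpow_mul]; norm_num, ← t1]
    have hI2 : ∫⁻ x, F₂ x ∂μ = (ENNReal.ofReal m) ^ (2:ℝ) := by
      rw [show (∫⁻ x, F₂ x ∂μ) = ((∫⁻ x, F₂ x ∂μ) ^ ((1:ℝ)/2)) ^ (2:ℝ) by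
        rw [← ENNReal.rpow_mul]; norm_num, ← t2]
    have hle : F₂ ≤ᵐ[μ] F₁ := by
      filter_upwards [hae] with x hx
      refine ENNReal.rpow_le_rpow ?_ (by norm_num)
      rw [ENNReal.coe_le_coe, ← NNReal.coe_le_coe, coe_nnnorm, coe_nnnorm]
      simp only [Pi.smul_apply, smul_eq_mul, norm_mul, Complex.norm_real,
        Real.norm_eq_abs, abs_of_nonneg hm0]
      exact mul_le_mul_of_nonneg_right hx (norm_nonneg _)
    have hgmeas : Measurable (⇑g : X → ℂ) := (Lp.stronglyMeasurable g).measurable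
    have hF₂meas : Measurable F₂ :=
      ((measurable_const.mul hgmeas).nnnorm.coe_nnreal_ennreal).pow_const _
    have hF₂top : ∫⁻ x, F₂ x ∂μ ≠ ⊤ := by
      rw [hI2]
      exact ENNReal.rpow_ne_top_of_nonneg (by norm_num) ENNReal.ofReal_ne_top
    have hsub0 : ∫⁻ x, (F₁ x - F₂ x) ∂μ = 0 := by
      rw [lintegral_sub hF₂meas hF₂top hle, hI1, hI2, tsub_self]
    have hF₁ae : AEMeasurable F₁ μ :=
      ((hf.1.aemeasurable.mul hgmeas.aemeasurable).nnnorm.coe_nnreal_ennreal).pow_const _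
    have heq : F₁ =ᵐ[μ] F₂ := by
      have h0 := (lintegral_eq_zero_iff' (hF₁ae.sub hF₂meas.aemeasurable)).1 hsub0
      filter_upwards [h0, hle] with x hx1 hx2
      exact le_antisymm (tsub_eq_zero_iff_le.1 hx1) hx2
    have hptwise : ∀ᵐ x ∂μ, g x ≠ 0 → ‖f x‖ = m := by
      filter_upwards [heq] with x hx hgx
      have h1 : (‖f x * g x‖₊ : ℝ≥0∞) = (‖((m:ℂ) • (⇑g : X → ℂ)) x‖₊ : ℝ≥0∞) :=
        ENNReal.rpow_left_injective (by norm_num : (2:ℝ) ≠ 0) hx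
      have h2 : ‖f x * g x‖ = ‖((m:ℂ) • (⇑g : X → ℂ)) x‖ := by
        have := congrArg ENNReal.toReal h1
        simpa [ENNReal.coe_toReal] using this
      simp only [Pi.smul_apply, smul_eq_mul, norm_mul, Complex.norm_real,
        Real.norm_eq_abs, abs_of_nonneg hm0] at h2
      exact mul_right_cancel₀ (norm_ne_zero_iff.2 hgx) h2
    have hgne : μ {x | g x ≠ 0} ≠ 0 := by
      intro h0
      have hz : (⇑g : X → ℂ) =ᵐ[μ] 0 := by
        rw [Filter.EventuallyEq, ae_iff]
        simpa using h0
      have hn0 : ‖g‖ = 0 := by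
        rw [Lp.norm_def, eLpNorm_congr_ae hz, eLpNorm_zero]; simp
      rw [hg1] at hn0; norm_num at hn0
    have hcomb : ∀ᵐ x ∂μ, (g x ≠ 0 → ‖f x‖ = m) ∧ f x = f' x := hptwise.and hff'
    set N := toMeasurable μ {x | ¬ ((g x ≠ 0 → ‖f x‖ = m) ∧ f x = f' x)} with hN
    have hNnull : μ N = 0 := by
      rw [hN, measure_toMeasurable]
      exact ae_iff.mp hcomb
    refine ⟨({x | g x ≠ 0} ∩ {x | ‖f' x‖ = m}) \ N, ?_, ?_, ?_⟩
    · refine (MeasurableSet.inter ?_ ?_).diff (measurableSet_toMeasurable _ _)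
      · exact (measurableSet_eq_fun hgmeas measurable_const).compl
      · exact measurableSet_eq_fun hf'meas.norm measurable_const
    · have hsub : {x | g x ≠ 0} ⊆ (({x | g x ≠ 0} ∩ {x | ‖f' x‖ = m}) \ N) ∪ N := by
        intro x hx
        by_cases hxN : x ∈ N
        · exact Or.inr hxN
        · refine Or.inl ⟨⟨hx, ?_⟩, hxN⟩
          have hP : (g x ≠ 0 → ‖f x‖ = m) ∧ f x = f' x := by
            by_contra hP
            exact hxN (subset_toMeasurable _ _ hP)
          rw [Set.mem_setOf_eq, ← hP.2]
          exact hP.1 hx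
      have h1 := (measure_mono hsub).trans (measure_union_le (μ := μ) _ _)
      rw [hNnull, add_zero] at h1
      exact lt_of_lt_of_le (pos_iff_ne_zero.2 hgne) h1
    · intro t ht
      obtain ⟨⟨htg, htf'⟩, htN⟩ := ht
      have hP : (g t ≠ 0 → ‖f t‖ = m) ∧ f t = f' t := by
        by_contra hP
        exact htN (subset_toMeasurable _ _ hP)
      rw [hP.2]
      exact htf'
  · rintro ⟨A, hA, hApos, hAf⟩
    obtain ⟨B', hB', hB'sub, hB'pos, hB'fin⟩ :=
      Measure.exists_subset_measure_lt_top hA hApos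
    obtain ⟨g, hg1, hg2⟩ := aux_unit hMf hB' hB'pos.ne' hB'fin.ne hm0
      (Filter.Eventually.of_forall fun x hx => le_of_eq (hAf x (hB'sub hx)))
    refine ⟨g, hg1, ?_⟩
    rw [hmm]
    refine le_antisymm hg2 ?_
    have hl := aux_lower hMf hm0 hae g
    rw [hg1, mul_one] at hl
    exact hl
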